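/- Let d ≥ 1, p ≥ 1, 0 ≤ s < 1, α, β ∈ ℝ, and let T : ℝ^d ∖ {0} → ℝ^d ∖ {0} be the inversion T(x) = x/|x|². Then for every measurable f : ℝ^d ∖ {0} → ℝ one has the identity (as values in [0, ∞]): ∫_{ℝ^d} ∫_{ℝ^d} |f(T(x)) − f(T(y))|^p |x−y|^{−d−sp} |x|^{−(d−α−sp)} |y|^{−(d−β−sp)} dy dx = ∫_{ℝ^d} ∫_{ℝ^d} |f(x) − f(y)|^p |x−y|^{−d−sp} |x|^{−α} |y|^{−β} dy dx. -/

import Mathlib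

open MeasureTheory Metric Set Filter
open scoped ENNReal

section Aux

open EuclideanGeometry

lemma gagliardo_aux_det (d : ℕ) (x : EuclideanSpace ℝ (Fin d)) (hx : x ≠ 0) :
    |(((1 / dist x 0) ^ 2 •
        (Submodule.reflection (ℝ ∙ (x - 0))ᗮ : EuclideanSpace ℝ (Fin d) →L[ℝ] EuclideanSpace ℝ (Fin d))).det)|
      = ‖x‖ ^ (-(2*(d:ℝ))) := by
  have hxn : (0:ℝ) < ‖x‖ := norm_pos_iff.2 hx
  set L : EuclideanSpace ℝ (Fin d) →L[ℝ] EuclideanSpace ℝ (Fin d) :=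
    (Submodule.reflection (ℝ ∙ (x - 0))ᗮ : EuclideanSpace ℝ (Fin d) →L[ℝ] EuclideanSpace ℝ (Fin d)) with hL
  have hdetL : |L.det| = 1 := by
    have h2 : L.det * L.det = 1 := by
      have hcomp : (L : EuclideanSpace ℝ (Fin d) →ₗ[ℝ] EuclideanSpace ℝ (Fin d)) ∘ₗ
          (L : EuclideanSpace ℝ (Fin d) →ₗ[ℝ] EuclideanSpace ℝ (Fin d)) = LinearMap.id := by
        ext y
        simp [hL, Submodule.reflection_reflection]
      have h := LinearMap.det_comp (L : EuclideanSpace ℝ (Fin d) →ₗ[ℝ] EuclideanSpace ℝ (Fin d))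
        (L : EuclideanSpace ℝ (Fin d) →ₗ[ℝ] EuclideanSpace ℝ (Fin d))
      rw [hcomp, LinearMap.det_id] at h
      exact h.symm
    rcases mul_self_eq_one_iff.1 h2 with h | h <;> simp [ContinuousLinearMap.det, h]
  have hsm : ((1 / dist x 0) ^ 2 • L).det = ((1 / dist x 0) ^ 2) ^ d * L.det := by
    rw [ContinuousLinearMap.det, ContinuousLinearMap.coe_smul, LinearMap.det_smul,
      finrank_euclideanSpace_fin]
  rw [hsm, abs_mul, abs_pow, hdetL, mul_one]
  rw [dist_zero_right, show -(2*(d:ℝ)) = -((2*d : ℕ):ℝ) by push_cast; ring,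
    Real.rpow_neg (norm_nonneg x), Real.rpow_natCast]
  rw [one_div, abs_pow, abs_inv, abs_norm, ← inv_pow, pow_mul]

lemma gagliardo_aux_alg (d : ℕ) (p s α β : ℝ) (A a b r : ℝ)
    (ha : 0 < a) (hb : 0 < b) (hr : 0 < r) :
    a ^ (-(2*(d:ℝ))) * (b ^ (-(2*(d:ℝ))) *
      (A / (r / (a*b)) ^ ((d:ℝ) + s*p) * (a⁻¹) ^ (-α) * (b⁻¹) ^ (-β)))
    = A / r ^ ((d:ℝ) + s*p) * a ^ (-((d:ℝ) - α - s*p)) * b ^ (-((d:ℝ) - β - s*p)) := by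
  have e1a : (a⁻¹) ^ (-α) = a ^ α := by
    rw [← Real.rpow_neg_one a, ← Real.rpow_mul ha.le]; norm_num
  have e1b : (b⁻¹) ^ (-β) = b ^ β := by
    rw [← Real.rpow_neg_one b, ← Real.rpow_mul hb.le]; norm_num
  have e2 : (r / (a*b)) ^ ((d:ℝ) + s*p)
      = r ^ ((d:ℝ) + s*p) / (a ^ ((d:ℝ) + s*p) * b ^ ((d:ℝ) + s*p)) := by
    rw [Real.div_rpow hr.le (by positivity), Real.mul_rpow ha.le hb.le]
  have ea : a ^ (-((d:ℝ) - α - s*p)) = a ^ (-(2*(d:ℝ))) * a ^ ((d:ℝ) + s*p) * a ^ α := by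
    rw [← Real.rpow_add ha, ← Real.rpow_add ha]; ring_nf
  have eb : b ^ (-((d:ℝ) - β - s*p)) = b ^ (-(2*(d:ℝ))) * b ^ ((d:ℝ) + s*p) * b ^ β := by
    rw [← Real.rpow_add hb, ← Real.rpow_add hb]; ring_nf
  rw [e1a, e1b, e2, ea, eb]
  have h1 : a ^ ((d:ℝ)+s*p) ≠ 0 := by positivity
  have h2 : b ^ ((d:ℝ)+s*p) ≠ 0 := by positivity
  have h3 : r ^ ((d:ℝ)+s*p) ≠ 0 := by positivity
  field_simp

end Aux

/-- Invariance of the weighted Gagliardo double integral on `ℝ^d ∖ {0}` under the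
inversion `T(x) = x / |x|²`, with the exponents `α' = d - α - sp`, `β' = d - β - sp`. -/
theorem gagliardo_inversion_identity
    (d : ℕ) (hd : 1 ≤ d) (p : ℝ) (hp : 1 ≤ p)
    (s : ℝ) (hs : 0 ≤ s) (hs' : s < 1) (α β : ℝ)
    (f : EuclideanSpace ℝ (Fin d) → ℝ) (hf : Measurable f)
    (T : EuclideanSpace ℝ (Fin d) → EuclideanSpace ℝ (Fin d))
    (hT : ∀ x, T x = (‖x‖ ^ 2)⁻¹ • x) :
    (∫⁻ x : EuclideanSpace ℝ (Fin d), ∫⁻ y : EuclideanSpace ℝ (Fin d),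
      ENNReal.ofReal
        (|f (T x) - f (T y)| ^ p / ‖x - y‖ ^ ((d : ℝ) + s * p)
          * ‖x‖ ^ (-((d : ℝ) - α - s * p)) * ‖y‖ ^ (-((d : ℝ) - β - s * p))))
    = ∫⁻ x : EuclideanSpace ℝ (Fin d), ∫⁻ y : EuclideanSpace ℝ (Fin d),
        ENNReal.ofReal
          (|f x - f y| ^ p / ‖x - y‖ ^ ((d : ℝ) + s * p)
            * ‖x‖ ^ (-α) * ‖y‖ ^ (-β)) := by
  classical
  haveI : Nonempty (Fin d) := ⟨⟨0, hd⟩⟩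
  haveI : Nontrivial (EuclideanSpace ℝ (Fin d)) := inferInstance
  set S : Set (EuclideanSpace ℝ (Fin d)) := {(0:EuclideanSpace ℝ (Fin d))}ᶜ with hSdef
  have hS : MeasurableSet S := (measurableSet_singleton _).compl
  have hvol0 : (volume : Measure (EuclideanSpace ℝ (Fin d))) {0} = 0 := measure_singleton _
  have hres : ∀ h : EuclideanSpace ℝ (Fin d) → ℝ≥0∞, ∫⁻ x, h x = ∫⁻ x in S, h x := by
    intro h
    have hrs : (volume : Measure (EuclideanSpace ℝ (Fin d))).restrict S = volume := by
      rw [Measure.restrict_congr_set (ae_eq_univ.2 (by simpa [hSdef] using hvol0)),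
        Measure.restrict_univ]
    rw [hrs]
  have hTinv : T = EuclideanGeometry.inversion (0:EuclideanSpace ℝ (Fin d)) 1 := by
    funext x
    rw [hT, EuclideanGeometry.inversion]
    simp [dist_zero_right, div_pow]
  have hinvol : Function.Involutive T := by
    rw [hTinv]; exact EuclideanGeometry.inversion_involutive 0 one_ne_zero
  have hT0 : T 0 = 0 := by rw [hT]; simp
  have hTne : ∀ x : EuclideanSpace ℝ (Fin d), x ≠ 0 → T x ≠ 0 := by
    intro x hx h0
    exact hx (by rw [← hinvol x, h0, hT0])
  have himg : T '' S = S := by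
    ext z
    constructor
    · rintro ⟨w, hw, rfl⟩; exact hTne w hw
    · intro hz; exact ⟨T z, hTne z hz, hinvol z⟩
  have hderiv : ∀ x ∈ S, HasFDerivWithinAt T
      ((1 / dist x 0) ^ 2 • (Submodule.reflection (ℝ ∙ (x - 0))ᗮ : EuclideanSpace ℝ (Fin d) →L[ℝ] EuclideanSpace ℝ (Fin d))) S x := by
    intro x hx
    rw [hTinv]
    exact (EuclideanGeometry.hasFDerivAt_inversion hx).hasFDerivWithinAt
  have hinj : Set.InjOn T S := hinvol.injective.injOn
  have covS : ∀ g : EuclideanSpace ℝ (Fin d) → ℝ≥0∞, ∫⁻ x in S, g x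
      = ∫⁻ x in S, ENNReal.ofReal (‖x‖ ^ (-(2*(d:ℝ)))) * g (T x) := by
    intro g
    conv_lhs => rw [← himg]
    rw [lintegral_image_eq_lintegral_abs_det_fderiv_mul volume hS hderiv hinj g]
    refine setLIntegral_congr_fun hS (fun x hx => ?_)
    rw [gagliardo_aux_det d x hx]
  have step1 : ∀ g : EuclideanSpace ℝ (Fin d) → ℝ≥0∞, ∫⁻ x, g x
      = ∫⁻ x in S, ENNReal.ofReal (‖x‖ ^ (-(2*(d:ℝ)))) * g (T x) :=
    fun g => (hres g).trans (covS g)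
  have hnormT : ∀ x : EuclideanSpace ℝ (Fin d), x ≠ 0 → ‖T x‖ = ‖x‖⁻¹ := by
    intro x hx
    rw [hT, norm_smul, norm_inv, norm_pow, norm_norm, sq]
    have : ‖x‖ ≠ 0 := norm_ne_zero_iff.2 hx
    field_simp
  have hdistT : ∀ x y : EuclideanSpace ℝ (Fin d), x ≠ 0 → y ≠ 0 → ‖T x - T y‖ = ‖x - y‖ / (‖x‖ * ‖y‖) := by
    intro x y hx hy
    have h := EuclideanGeometry.dist_inversion_inversion (c := (0:EuclideanSpace ℝ (Fin d))) hx hy 1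
    rw [← hTinv] at h
    have h2 : ‖T x - T y‖ = ‖y‖⁻¹ * ‖x‖⁻¹ * ‖x - y‖ := by
      simpa [dist_eq_norm, dist_zero_right, one_pow, div_mul_eq_mul_div, one_mul] using h
    have hxn : ‖x‖ ≠ 0 := norm_ne_zero_iff.2 hx
    have hyn : ‖y‖ ≠ 0 := norm_ne_zero_iff.2 hy
    rw [h2, div_eq_mul_inv, mul_inv]
    ring
  -- key pointwise identity
  have key : ∀ x ∈ S, ∀ y ∈ S,
      ENNReal.ofReal
        (|f (T x) - f (T y)| ^ p / ‖x - y‖ ^ ((d : ℝ) + s * p)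
          * ‖x‖ ^ (-((d : ℝ) - α - s * p)) * ‖y‖ ^ (-((d : ℝ) - β - s * p)))
      = ENNReal.ofReal (‖x‖ ^ (-(2*(d:ℝ)))) * (ENNReal.ofReal (‖y‖ ^ (-(2*(d:ℝ)))) *
          ENNReal.ofReal
            (|f (T x) - f (T y)| ^ p / ‖T x - T y‖ ^ ((d : ℝ) + s * p)
              * ‖T x‖ ^ (-α) * ‖T y‖ ^ (-β))) := by
    intro x hx y hy
    have hx0 : x ≠ 0 := hx
    have hy0 : y ≠ 0 := hy
    have hax : (0:ℝ) < ‖x‖ := norm_pos_iff.2 hx0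
    have hay : (0:ℝ) < ‖y‖ := norm_pos_iff.2 hy0
    rw [← ENNReal.ofReal_mul (by positivity), ← ENNReal.ofReal_mul (by positivity)]
    congr 1
    rw [hnormT x hx0, hnormT y hy0, hdistT x y hx0 hy0]
    have hps : p ≠ 0 := by linarith
    have hq : (d:ℝ) + s * p ≠ 0 := by
      have h1 : (1:ℝ) ≤ (d:ℝ) := by exact_mod_cast hd
      have h2 : 0 ≤ s * p := mul_nonneg hs (by linarith)
      nlinarith
    rcases eq_or_ne x y with rfl | hxy
    · simp [sub_self, abs_zero, Real.zero_rpow hps, Real.zero_rpow hq, zero_div, div_zero]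
    · have hr : (0:ℝ) < ‖x - y‖ := by
        rw [norm_pos_iff, sub_ne_zero]; exact hxy
      exact (gagliardo_aux_alg d p s α β _ _ _ _ hax hay hr).symm
  calc
    (∫⁻ x : EuclideanSpace ℝ (Fin d), ∫⁻ y : EuclideanSpace ℝ (Fin d),
      ENNReal.ofReal
        (|f (T x) - f (T y)| ^ p / ‖x - y‖ ^ ((d : ℝ) + s * p)
          * ‖x‖ ^ (-((d : ℝ) - α - s * p)) * ‖y‖ ^ (-((d : ℝ) - β - s * p))))
      = ∫⁻ x in S, ∫⁻ y in S,
          ENNReal.ofReal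
            (|f (T x) - f (T y)| ^ p / ‖x - y‖ ^ ((d : ℝ) + s * p)
              * ‖x‖ ^ (-((d : ℝ) - α - s * p)) * ‖y‖ ^ (-((d : ℝ) - β - s * p))) := by
        rw [hres]
        exact setLIntegral_congr_fun hS (fun x _ => hres _)
    _ = ∫⁻ x in S, ∫⁻ y in S,
          ENNReal.ofReal (‖x‖ ^ (-(2*(d:ℝ)))) * (ENNReal.ofReal (‖y‖ ^ (-(2*(d:ℝ)))) *
            ENNReal.ofReal
              (|f (T x) - f (T y)| ^ p / ‖T x - T y‖ ^ ((d : ℝ) + s * p)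
                * ‖T x‖ ^ (-α) * ‖T y‖ ^ (-β))) := by
        refine setLIntegral_congr_fun hS (fun x hx => ?_)
        exact setLIntegral_congr_fun hS (fun y hy => key x hx y hy)
    _ = ∫⁻ x in S, ENNReal.ofReal (‖x‖ ^ (-(2*(d:ℝ)))) * ∫⁻ y in S,
          ENNReal.ofReal (‖y‖ ^ (-(2*(d:ℝ)))) *
            ENNReal.ofReal
              (|f (T x) - f (T y)| ^ p / ‖T x - T y‖ ^ ((d : ℝ) + s * p)
                * ‖T x‖ ^ (-α) * ‖T y‖ ^ (-β)) := by
        refine setLIntegral_congr_fun hS (fun x _ => ?_)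
        rw [lintegral_const_mul' _ _ ENNReal.ofReal_ne_top]
    _ = ∫⁻ x in S, ENNReal.ofReal (‖x‖ ^ (-(2*(d:ℝ)))) * ∫⁻ y : EuclideanSpace ℝ (Fin d),
            ENNReal.ofReal
              (|f (T x) - f y| ^ p / ‖T x - y‖ ^ ((d : ℝ) + s * p)
                * ‖T x‖ ^ (-α) * ‖y‖ ^ (-β)) := by
        refine setLIntegral_congr_fun hS (fun x _ => ?_)
        rw [step1 (fun y => ENNReal.ofReal
          (|f (T x) - f y| ^ p / ‖T x - y‖ ^ ((d : ℝ) + s * p)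
            * ‖T x‖ ^ (-α) * ‖y‖ ^ (-β)))]
    _ = ∫⁻ x : EuclideanSpace ℝ (Fin d), ∫⁻ y : EuclideanSpace ℝ (Fin d),
          ENNReal.ofReal
            (|f x - f y| ^ p / ‖x - y‖ ^ ((d : ℝ) + s * p)
              * ‖x‖ ^ (-α) * ‖y‖ ^ (-β)) := by
        rw [step1 (fun x => ∫⁻ y : EuclideanSpace ℝ (Fin d),
          ENNReal.ofReal
            (|f x - f y| ^ p / ‖x - y‖ ^ ((d : ℝ) + s * p)
              * ‖x‖ ^ (-α) * ‖y‖ ^ (-β)))]
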